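/- Let V be an n-dimensional vector space over a field with a nondegenerate symmetric bilinear form ⟨·,·⟩, and let (e_i)_{i=1}^n, (f_i)_{i=1}^n be two bases. Then for any m-element subsets S, U ⊆ [n]: Σ_{T ⊆ [n], |T| = m} (-1)^{Σ_{s∈S} s + Σ_{t∈T} t} · det_{i∈S^c, j∈T^c}(⟨e_i, f_j⟩) · det_{i∈U, j∈T}(⟨e_i, f_j⟩) / det_{1≤i,j≤n}(⟨e_i, f_j⟩) = δ_{SU}. -/

import Mathlib

open Finset Equiv

set_option linter.unusedSectionVars false

namespace CMO
variable {n m : ℕ}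

lemma card_le (S : Finset (Fin n)) (hS : S.card = m) : m ≤ n := by
  have := S.card_le_univ
  rw [Fintype.card_fin] at this; omega

lemma compl_card (S : Finset (Fin n)) (hS : S.card = m) : (Sᶜ).card = n - m := by
  rw [card_compl, hS, Fintype.card_fin]

lemma elim_bij (S : Finset (Fin n)) (hS : S.card = m) :
    Function.Bijective (Sum.elim (⇑(S.orderEmbOfFin hS)) (⇑((Sᶜ).orderEmbOfFin (compl_card S hS)))) := by
  rw [Fintype.bijective_iff_injective_and_card]
  refine ⟨?_, by simp [Nat.add_sub_cancel' (card_le S hS)]⟩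
  rintro (a | a) (b | b) h <;> simp only [Sum.elim_inl, Sum.elim_inr] at h
  · simpa using (S.orderEmbOfFin hS).injective h
  · have h1 : S.orderEmbOfFin hS a ∈ S := S.orderEmbOfFin_mem hS a
    have h2 : (Sᶜ).orderEmbOfFin (compl_card S hS) b ∈ Sᶜ := (Sᶜ).orderEmbOfFin_mem _ b
    rw [← h, mem_compl] at h2
    exact absurd h1 h2
  · have h1 : S.orderEmbOfFin hS b ∈ S := S.orderEmbOfFin_mem hS b
    have h2 : (Sᶜ).orderEmbOfFin (compl_card S hS) a ∈ Sᶜ := (Sᶜ).orderEmbOfFin_mem _ a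
    rw [h, mem_compl] at h2
    exact absurd h1 h2
  · simpa using ((Sᶜ).orderEmbOfFin (compl_card S hS)).injective h

/-- The equiv `Fin m ⊕ Fin (n-m) ≃ Fin n` sending blocks to `S` and `Sᶜ` in order. -/
noncomputable def blockEquiv (S : Finset (Fin n)) (hS : S.card = m) :
    Fin m ⊕ Fin (n - m) ≃ Fin n :=
  Equiv.ofBijective _ (elim_bij S hS)

@[simp] lemma blockEquiv_inl (S : Finset (Fin n)) (hS : S.card = m) (k : Fin m) :
    blockEquiv S hS (Sum.inl k) = S.orderEmbOfFin hS k := rfl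

@[simp] lemma blockEquiv_inr (S : Finset (Fin n)) (hS : S.card = m) (k : Fin (n - m)) :
    blockEquiv S hS (Sum.inr k) = (Sᶜ).orderEmbOfFin (compl_card S hS) k := rfl

/-- reference equiv -/
def E0 (h : m ≤ n) : Fin m ⊕ Fin (n - m) ≃ Fin n :=
  finSumFinEquiv.trans (finCongr (Nat.add_sub_cancel' h))

/-- the shuffle permutation -/
noncomputable def rho (S : Finset (Fin n)) (hS : S.card = m) : Perm (Fin n) :=
  (E0 (card_le S hS)).symm.trans (blockEquiv S hS)

lemma rho_apply (S : Finset (Fin n)) (hS : S.card = m) (x : Fin m ⊕ Fin (n - m)) :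
    rho S hS (E0 (card_le S hS) x) = blockEquiv S hS x := by
  simp [rho]

section swapstep
variable (S : Finset (Fin n)) (hS : S.card = m) (s : Fin n) (hs : s ∈ S)
  (hs0 : (s : ℕ) ≠ 0) (s' : Fin n) (hs' : (s' : ℕ) = (s : ℕ) - 1) (hs'S : s' ∉ S)
include hS hs hs0 hs' hs'S

lemma s'_ne_s : s' ≠ s := by
  intro h; rw [h] at hs'S; exact hs'S hs

lemma swap_card : (insert s' (S.erase s)).card = m := by
  rw [card_insert_of_notMem (fun h => hs'S (mem_of_mem_erase h)),
    card_erase_of_mem hs, hS]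
  have : 1 ≤ m := by rw [← hS]; exact card_pos.mpr ⟨s, hs⟩
  omega

lemma s_not_mem_S' : s ∉ insert s' (S.erase s) := by
  intro h
  rcases mem_insert.mp h with h | h
  · exact s'_ne_s S hS s hs hs0 s' hs' hs'S h.symm
  · exact (notMem_erase s S) h

lemma swap_oE (k : Fin m) :
    Equiv.swap s' s ((insert s' (S.erase s)).orderEmbOfFin
        (swap_card S hS s hs hs0 s' hs' hs'S) k)
      = S.orderEmbOfFin hS k := by
  set S' := insert s' (S.erase s) with hS'def
  have hc : S'.card = m := swap_card S hS s hs hs0 s' hs' hs'S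
  have hsS' : s ∉ S' := s_not_mem_S' S hS s hs hs0 s' hs' hs'S
  have key : ∀ x ∈ S', Equiv.swap s' s x ∈ S ∧
      ((Equiv.swap s' s x : Fin n) : ℕ) = if x = s' then (s : ℕ) else (x : ℕ) := by
    intro x hx
    by_cases hxs' : x = s'
    · subst hxs'; simp [Equiv.swap_apply_left, hs]
    · have hxs : x ≠ s := fun h => hsS' (h ▸ hx)
      rw [Equiv.swap_apply_of_ne_of_ne hxs' hxs]
      have : x ∈ S := by
        rcases mem_insert.mp hx with h | h
        · exact absurd h hxs'
        · exact mem_of_mem_erase h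
      simp [this, hxs']
  refine congrFun (Finset.orderEmbOfFin_unique hS
      (f := fun k => Equiv.swap s' s ((S'.orderEmbOfFin hc) k))
      (fun k => (key _ (S'.orderEmbOfFin_mem _ k)).1) ?_) k
  intro k l hkl
  simp only []
  set a := S'.orderEmbOfFin hc k with hadef
  set b := S'.orderEmbOfFin hc l with hbdef
  have hmono : (a : ℕ) < (b : ℕ) := Fin.lt_def.mp ((S'.orderEmbOfFin hc).strictMono hkl)
  have ha := key a (S'.orderEmbOfFin_mem _ k)
  have hb := key b (S'.orderEmbOfFin_mem _ l)
  have hbs : b ≠ s := fun h => hsS' (h ▸ S'.orderEmbOfFin_mem hc l)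
  have hbsv : (b : ℕ) ≠ (s : ℕ) := fun h => hbs (Fin.ext h)
  rw [Fin.lt_def, ha.2, hb.2]
  by_cases hak : a = s' <;> by_cases hbk : b = s'
  · exact absurd (Fin.ext_iff.mp (hak.trans hbk.symm)) (Nat.ne_of_lt hmono)
  · rw [if_pos hak, if_neg hbk]
    have h1 : (a : ℕ) = (s' : ℕ) := by rw [hak]
    omega
  · rw [if_neg hak, if_pos hbk]
    have h2 : (b : ℕ) = (s' : ℕ) := by rw [hbk]
    omega
  · rw [if_neg hak, if_neg hbk]; exact hmono

lemma swap_oE_compl (k : Fin (n - m)) :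
    Equiv.swap s' s (((insert s' (S.erase s))ᶜ).orderEmbOfFin
        (compl_card _ (swap_card S hS s hs hs0 s' hs' hs'S)) k)
      = (Sᶜ).orderEmbOfFin (compl_card S hS) k := by
  set S' := insert s' (S.erase s) with hS'def
  have hc : (S'ᶜ).card = n - m := compl_card _ (swap_card S hS s hs hs0 s' hs' hs'S)
  have hsS' : s ∉ S' := s_not_mem_S' S hS s hs hs0 s' hs' hs'S
  have hs'c : s' ∉ S'ᶜ := by simp [hS'def]
  have key : ∀ x ∈ S'ᶜ, Equiv.swap s' s x ∈ Sᶜ ∧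
      ((Equiv.swap s' s x : Fin n) : ℕ) = if x = s then (s' : ℕ) else (x : ℕ) := by
    intro x hx
    by_cases hxs : x = s
    · subst hxs; simp [Equiv.swap_apply_right, mem_compl, hs'S]
    · have hxs' : x ≠ s' := fun h => hs'c (h ▸ hx)
      rw [Equiv.swap_apply_of_ne_of_ne hxs' hxs]
      have hxS : x ∉ S := by
        intro hxS
        exact (mem_compl.mp hx) (mem_insert_of_mem (mem_erase.mpr ⟨hxs, hxS⟩))
      simp [mem_compl, hxS, hxs]
  refine congrFun (Finset.orderEmbOfFin_unique (compl_card S hS)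
      (f := fun k => Equiv.swap s' s (((S'ᶜ).orderEmbOfFin hc) k))
      (fun k => (key _ ((S'ᶜ).orderEmbOfFin_mem _ k)).1) ?_) k
  intro k l hkl
  simp only []
  set a := (S'ᶜ).orderEmbOfFin hc k with hadef
  set b := (S'ᶜ).orderEmbOfFin hc l with hbdef
  have hmono : (a : ℕ) < (b : ℕ) := Fin.lt_def.mp (((S'ᶜ).orderEmbOfFin hc).strictMono hkl)
  have ha := key a ((S'ᶜ).orderEmbOfFin_mem _ k)
  have hb := key b ((S'ᶜ).orderEmbOfFin_mem _ l)
  have has' : a ≠ s' := fun h => hs'c (h ▸ (S'ᶜ).orderEmbOfFin_mem hc k)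
  have has'v : (a : ℕ) ≠ (s' : ℕ) := fun h => has' (Fin.ext h)
  rw [Fin.lt_def, ha.2, hb.2]
  by_cases hak : a = s <;> by_cases hbk : b = s
  · exact absurd (Fin.ext_iff.mp (hak.trans hbk.symm)) (Nat.ne_of_lt hmono)
  · rw [if_pos hak, if_neg hbk]
    have h1 : (a : ℕ) = (s : ℕ) := by rw [hak]
    omega
  · rw [if_neg hak, if_pos hbk]
    have h2 : (b : ℕ) = (s : ℕ) := by rw [hbk]
    have hav : (a : ℕ) ≠ (s : ℕ) := fun h => hak (Fin.ext h)
    omega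
  · rw [if_neg hak, if_neg hbk]; exact hmono

lemma rho_swap :
    rho S hS = (rho (insert s' (S.erase s)) (swap_card S hS s hs hs0 s' hs' hs'S)).trans
      (Equiv.swap s' s) := by
  apply Equiv.ext
  intro y
  obtain ⟨x, rfl⟩ := (E0 (card_le S hS)).surjective y
  have h1 : rho (insert s' (S.erase s)) (swap_card S hS s hs hs0 s' hs' hs'S)
      (E0 (card_le S hS) x) = blockEquiv _ (swap_card S hS s hs hs0 s' hs' hs'S) x :=
    rho_apply _ _ x
  rw [Equiv.trans_apply, h1, rho_apply]
  cases x with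
  | inl k =>
    rw [blockEquiv_inl, blockEquiv_inl]
    exact (swap_oE S hS s hs hs0 s' hs' hs'S k).symm
  | inr k =>
    rw [blockEquiv_inr, blockEquiv_inr]
    exact (swap_oE_compl S hS s hs hs0 s' hs' hs'S k).symm

end swapstep

/-- the reference subset {0,...,m-1} -/
def S0 (h : m ≤ n) : Finset (Fin n) :=
  (univ : Finset (Fin m)).map (Fin.castLEEmb h)

lemma card_S0 (h : m ≤ n) : (S0 h).card = m := by
  simp [S0]

lemma mem_S0 (h : m ≤ n) (x : Fin n) : x ∈ S0 h ↔ (x : ℕ) < m := by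
  simp only [S0, mem_map, mem_univ, true_and]
  constructor
  · rintro ⟨a, rfl⟩; simpa [Fin.castLEEmb] using a.isLt
  · intro hx; exact ⟨⟨(x : ℕ), hx⟩, Fin.ext (by simp [Fin.castLEEmb])⟩

def fpred (s : Fin n) : Fin n := ⟨(s : ℕ) - 1, Nat.lt_of_le_of_lt (Nat.sub_le _ _) s.isLt⟩

lemma sign_rho_eq (hmn : m ≤ n) : ∀ (k : ℕ) (S : Finset (Fin n)) (hS : S.card = m),
    (∑ s ∈ S, (s : ℕ)) = k →
    Perm.sign (rho S hS) = (-1) ^ (∑ s ∈ S, (s : ℕ)) *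
      ((-1) ^ (∑ s ∈ S0 hmn, (s : ℕ)) * Perm.sign (rho (S0 hmn) (card_S0 hmn))) := by
  intro k
  induction k using Nat.strong_induction_on with
  | _ k ih =>
    intro S hS hsum
    by_cases hall : ∀ s ∈ S, (s : ℕ) ≠ 0 → fpred s ∈ S
    · -- S is downward closed, hence S = S0
      have down : ∀ (c : ℕ) (s : Fin n), s ∈ S → ∀ j : Fin n,
          (s : ℕ) - (j : ℕ) = c → j ≤ s → j ∈ S := by
        intro c
        induction c with
        | zero =>
          intro s hsS j hc hle
          rw [Fin.le_def] at hle
          have : j = s := Fin.ext (by omega)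
          rwa [this]
        | succ c ihc =>
          intro s hsS j hc hle
          rw [Fin.le_def] at hle
          have hs0 : (s : ℕ) ≠ 0 := by omega
          have hp := hall s hsS hs0
          exact ihc (fpred s) hp j (by simp only [fpred]; omega)
            (by rw [Fin.le_def]; simp only [fpred]; omega)
      have hsub : S ⊆ S0 hmn := by
        intro s hsS
        rw [mem_S0]
        by_contra hge
        push_neg at hge
        have hIic : Finset.Iic s ⊆ S := fun j hj => down _ s hsS j rfl (mem_Iic.mp hj)
        have hcard := card_le_card hIic
        rw [Fin.card_Iic, hS] at hcard
        omega
      have hSeq : S = S0 hmn :=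
        Finset.eq_of_subset_of_card_le hsub (by rw [card_S0, hS])
      subst hSeq
      rw [← mul_assoc, ← pow_add, Even.neg_one_pow ⟨_, rfl⟩, one_mul]
    · push_neg at hall
      obtain ⟨s, hs, hs0, hps⟩ := hall
      have hs'v : ((fpred s : Fin n) : ℕ) = (s : ℕ) - 1 := rfl
      set s' := fpred s with hs'def
      set S' := insert s' (S.erase s) with hS'def
      have hc : S'.card = m := swap_card S hS s hs hs0 s' hs'v hps
      have hsum' : (∑ x ∈ S', (x : ℕ)) = k - 1 ∧ 1 ≤ k := by
        have h1 : (s : ℕ) + ∑ x ∈ S.erase s, (x : ℕ) = ∑ x ∈ S, (x : ℕ) :=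
          Finset.add_sum_erase S _ hs
        have h2 : (∑ x ∈ S', (x : ℕ)) = (s' : ℕ) + ∑ x ∈ S.erase s, (x : ℕ) := by
          rw [hS'def, Finset.sum_insert (fun h => hps (mem_of_mem_erase h))]
        constructor
        · rw [h2, hs'v]; omega
        · omega
      have hk1 : k - 1 < k := by omega
      have hrec := ih (k - 1) hk1 S' hc hsum'.1
      have hsplit := rho_swap S hS s hs hs0 s' hs'v hps
      rw [hsplit]
      have : ((rho S' hc).trans (Equiv.swap s' s)) = Equiv.swap s' s * rho S' hc := rfl
      rw [this, map_mul, Perm.sign_swap (s'_ne_s S hS s hs hs0 s' hs'v hps), hrec, hsum'.1, hsum]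
      have hkpos : 1 ≤ k := hsum'.2
      have : ((-1 : ℤˣ)) ^ k = -(-1) ^ (k - 1) := by
        conv_lhs => rw [show k = (k - 1) + 1 by omega]
        rw [pow_succ, mul_neg_one]
      rw [this, neg_mul, ← neg_one_mul ((-1 : ℤˣ) ^ (k-1)), one_mul, mul_assoc]
      exact (neg_one_mul _).symm
lemma sign_rho_mul (S T : Finset (Fin n)) (hS : S.card = m) (hT : T.card = m) :
    (Perm.sign (rho S hS) * Perm.sign (rho T hT) : ℤˣ) =
      (-1) ^ ((∑ s ∈ S, ((s : ℕ) + 1)) + ∑ t ∈ T, ((t : ℕ) + 1)) := by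
  have hmn := card_le S hS
  rw [sign_rho_eq hmn _ S hS rfl, sign_rho_eq hmn _ T hT rfl,
    mul_mul_mul_comm, ← pow_add, Int.units_mul_self, mul_one]
  have h1 : (∑ s ∈ S, ((s : ℕ) + 1)) = (∑ s ∈ S, (s : ℕ)) + m := by
    rw [Finset.sum_add_distrib, sum_const, hS, smul_eq_mul, mul_one]
  have h2 : (∑ t ∈ T, ((t : ℕ) + 1)) = (∑ t ∈ T, (t : ℕ)) + m := by
    rw [Finset.sum_add_distrib, sum_const, hT, smul_eq_mul, mul_one]
  rw [h1, h2, show (∑ s ∈ S, (s : ℕ)) + m + ((∑ t ∈ T, (t : ℕ)) + m)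
      = ((∑ s ∈ S, (s : ℕ)) + ∑ t ∈ T, (t : ℕ)) + 2 * m by ring]
  rw [pow_add (-1 : ℤˣ) ((∑ s ∈ S, (s : ℕ)) + ∑ t ∈ T, (t : ℕ)) (2 * m),
    pow_mul, neg_one_sq, one_pow, mul_one, pow_add]

/-- the parametrization of permutations -/
noncomputable def phi (S : Finset (Fin n)) (hS : S.card = m) :
    {T : Finset (Fin n) // T.card = m} × (Perm (Fin m) × Perm (Fin (n - m))) → Perm (Fin n) :=
  fun p => (blockEquiv p.1.1 p.1.2).symm.trans ((Equiv.sumCongr p.2.1 p.2.2).trans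
    (blockEquiv S hS))

lemma phi_mem_iff (S : Finset (Fin n)) (hS : S.card = m)
    (p : {T : Finset (Fin n) // T.card = m} × (Perm (Fin m) × Perm (Fin (n - m))))
    (x : Fin n) : phi S hS p x ∈ S ↔ x ∈ p.1.1 := by
  obtain ⟨y, rfl⟩ := (blockEquiv p.1.1 p.1.2).surjective x
  have : phi S hS p (blockEquiv p.1.1 p.1.2 y)
      = blockEquiv S hS (Equiv.sumCongr p.2.1 p.2.2 y) := by
    simp [phi]
  rw [this]
  cases y with
  | inl k =>
    simp only [Equiv.sumCongr_apply, Sum.map_inl, blockEquiv_inl]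
    exact iff_of_true (S.orderEmbOfFin_mem hS _) (p.1.1.orderEmbOfFin_mem p.1.2 _)
  | inr k =>
    simp only [Equiv.sumCongr_apply, Sum.map_inr, blockEquiv_inr]
    exact iff_of_false (fun h => (mem_compl.mp ((Sᶜ).orderEmbOfFin_mem _ _)) h)
      (fun h => (mem_compl.mp ((p.1.1ᶜ).orderEmbOfFin_mem _ _)) h)

lemma phi_bijective (S : Finset (Fin n)) (hS : S.card = m) :
    Function.Bijective (phi S hS) := by
  rw [Fintype.bijective_iff_injective_and_card]
  constructor
  · intro p q h
    have h1 : p.1 = q.1 := Subtype.ext (Finset.ext fun x => by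
      rw [← phi_mem_iff S hS p x, ← phi_mem_iff S hS q x, h])
    have hbe : blockEquiv p.1.1 p.1.2 = blockEquiv q.1.1 q.1.2 :=
      congrArg (fun t : {T : Finset (Fin n) // T.card = m} => blockEquiv t.1 t.2) h1
    have hα : p.2.1 = q.2.1 := by
      ext k
      refine Fin.val_eq_of_eq ((S.orderEmbOfFin hS).injective ?_)
      have e1 : phi S hS p (blockEquiv p.1.1 p.1.2 (Sum.inl k))
          = S.orderEmbOfFin hS (p.2.1 k) := by
        simp only [phi, Equiv.trans_apply, Equiv.symm_apply_apply, Equiv.sumCongr_apply,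
          Sum.map_inl]
        rfl
      have e2 : phi S hS q (blockEquiv q.1.1 q.1.2 (Sum.inl k))
          = S.orderEmbOfFin hS (q.2.1 k) := by
        simp only [phi, Equiv.trans_apply, Equiv.symm_apply_apply, Equiv.sumCongr_apply,
          Sum.map_inl]
        rfl
      rw [← e1, ← e2, h, hbe]
    have hβ : p.2.2 = q.2.2 := by
      ext k
      refine Fin.val_eq_of_eq (((Sᶜ).orderEmbOfFin (compl_card S hS)).injective ?_)
      have e1 : phi S hS p (blockEquiv p.1.1 p.1.2 (Sum.inr k))
          = (Sᶜ).orderEmbOfFin (compl_card S hS) (p.2.2 k) := by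
        simp only [phi, Equiv.trans_apply, Equiv.symm_apply_apply, Equiv.sumCongr_apply,
          Sum.map_inr]
        rfl
      have e2 : phi S hS q (blockEquiv q.1.1 q.1.2 (Sum.inr k))
          = (Sᶜ).orderEmbOfFin (compl_card S hS) (q.2.2 k) := by
        simp only [phi, Equiv.trans_apply, Equiv.symm_apply_apply, Equiv.sumCongr_apply,
          Sum.map_inr]
        rfl
      rw [← e1, ← e2, h, hbe]
    exact Prod.ext h1 (Prod.ext hα hβ)
  · have hmn := card_le S hS
    rw [Fintype.card_prod, Fintype.card_prod, Fintype.card_perm, Fintype.card_perm,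
      Fintype.card_finset_len, Fintype.card_perm, Fintype.card_fin, Fintype.card_fin,
      Fintype.card_fin, ← Nat.choose_mul_factorial_mul_factorial hmn, mul_assoc]


lemma sign_phi (S : Finset (Fin n)) (hS : S.card = m)
    (T : {T : Finset (Fin n) // T.card = m}) (α : Perm (Fin m)) (β : Perm (Fin (n - m))) :
    Perm.sign (phi S hS (T, α, β)) =
      (-1) ^ ((∑ s ∈ S, ((s : ℕ) + 1)) + ∑ t ∈ T.1, ((t : ℕ) + 1)) *
        (Perm.sign α * Perm.sign β) := by
  have hmn := card_le S hS
  have hdecomp : phi S hS (T, α, β)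
      = rho S hS * ((E0 hmn).permCongr (Equiv.sumCongr α β)) * (rho T.1 T.2)⁻¹ := by
    ext x
    simp [phi, rho, Perm.mul_apply, Equiv.permCongr_apply, Equiv.symm_apply_apply,
      Perm.inv_def]
  rw [hdecomp, map_mul, map_mul, Perm.sign_inv, Perm.sign_permCongr, Perm.sign_sumCongr,
    mul_right_comm, sign_rho_mul S T.1 hS T.2]

lemma prod_phi {R : Type*} [CommRing R] (M : Matrix (Fin n) (Fin n) R)
    (S : Finset (Fin n)) (hS : S.card = m)
    (T : {T : Finset (Fin n) // T.card = m}) (α : Perm (Fin m)) (β : Perm (Fin (n - m))) :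
    (∏ j, M (phi S hS (T, α, β) j) j) =
      (∏ k : Fin m, M (S.orderEmbOfFin hS (α k)) (T.1.orderEmbOfFin T.2 k)) *
        ∏ k : Fin (n - m), M ((Sᶜ).orderEmbOfFin (compl_card S hS) (β k))
          ((T.1ᶜ).orderEmbOfFin (compl_card T.1 T.2) k) := by
  rw [← Equiv.prod_comp (blockEquiv T.1 T.2) (fun j => M (phi S hS (T, α, β) j) j),
    Fintype.prod_sum_type]
  congr 1
  · refine Finset.prod_congr rfl fun k _ => ?_
    have e1 : phi S hS (T, α, β) (blockEquiv T.1 T.2 (Sum.inl k))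
        = S.orderEmbOfFin hS (α k) := by
      simp only [phi, Equiv.trans_apply, Equiv.symm_apply_apply, Equiv.sumCongr_apply,
        Sum.map_inl]
      rfl
    rw [e1, blockEquiv_inl]
  · refine Finset.prod_congr rfl fun k _ => ?_
    have e1 : phi S hS (T, α, β) (blockEquiv T.1 T.2 (Sum.inr k))
        = (Sᶜ).orderEmbOfFin (compl_card S hS) (β k) := by
      simp only [phi, Equiv.trans_apply, Equiv.symm_apply_apply, Equiv.sumCongr_apply,
        Sum.map_inr]
      rfl
    rw [e1, blockEquiv_inr]

lemma laplace {R : Type*} [CommRing R] (M : Matrix (Fin n) (Fin n) R)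
    (S : Finset (Fin n)) (hS : S.card = m) :
    M.det = ∑ T : {T : Finset (Fin n) // T.card = m},
      (-1 : R) ^ ((∑ s ∈ S, ((s : ℕ) + 1)) + ∑ t ∈ T.1, ((t : ℕ) + 1)) *
        Matrix.det (Matrix.of fun i j : Fin (n - m) =>
          M ((Sᶜ).orderEmbOfFin (compl_card S hS) i)
            ((T.1ᶜ).orderEmbOfFin (compl_card T.1 T.2) j)) *
        Matrix.det (Matrix.of fun i j : Fin m =>
          M (S.orderEmbOfFin hS i) (T.1.orderEmbOfFin T.2 j)) := by
  rw [Matrix.det_apply']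
  rw [← Function.Bijective.sum_comp (phi_bijective S hS)
    (fun σ => ((Perm.sign σ : ℤ) : R) * ∏ i, M (σ i) i)]
  rw [Fintype.sum_prod_type]
  refine Finset.sum_congr rfl fun T _ => ?_
  rw [Fintype.sum_prod_type]
  rw [Matrix.det_apply', Matrix.det_apply', Finset.mul_sum]
  refine Finset.sum_congr rfl fun α _ => ?_
  rw [Finset.mul_sum, Finset.sum_mul]
  refine Finset.sum_congr rfl fun β _ => ?_
  rw [sign_phi, prod_phi]
  simp only [Matrix.of_apply, Units.val_mul, Int.cast_mul, Units.val_pow_eq_pow_val,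
    Int.cast_pow, Units.val_neg, Units.val_one, Int.cast_neg, Int.cast_one]
  ring


lemma oE_orderIso_symm (S : Finset (Fin n)) (hS : S.card = m) (i : Fin m)
    (h : S.orderEmbOfFin hS i ∈ S) :
    (S.orderIsoOfFin hS).symm ⟨S.orderEmbOfFin hS i, h⟩ = i := by
  have : (⟨S.orderEmbOfFin hS i, h⟩ : {x // x ∈ S}) = S.orderIsoOfFin hS i :=
    Subtype.ext (by rw [Finset.coe_orderIsoOfFin_apply])
  rw [this, OrderIso.symm_apply_apply]

lemma oE_orderIso_symm' (S : Finset (Fin n)) (hS : S.card = m) (x : Fin n) (h : x ∈ S) :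
    S.orderEmbOfFin hS ((S.orderIsoOfFin hS).symm ⟨x, h⟩) = x := by
  rw [← Finset.coe_orderIsoOfFin_apply, OrderIso.apply_symm_apply]
end CMO



theorem complementary_minor_orthogonality {F : Type*} [Field F] {n m : ℕ}
    (V : Type*) [AddCommGroup V] [Module F V] [FiniteDimensional F V]
    (hdim : Module.finrank F V = n)
    (B : LinearMap.BilinForm F V)
    (hB : B.Nondegenerate)
    (hBsymm : ∀ u v, B u v = B v u)
    (e f : Module.Basis (Fin n) F V)
    (S U : Finset (Fin n)) (hS : S.card = m) (hU : U.card = m) :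
    (∑ T : {T : Finset (Fin n) // T.card = m},
      (-1 : F) ^ ((∑ s ∈ S, ((s : ℕ) + 1)) + ∑ t ∈ T.1, ((t : ℕ) + 1)) *
        Matrix.det (Matrix.of fun i j : Fin (n - m) =>
          B (e ((Sᶜ).orderEmbOfFin
                (by rw [Finset.card_compl, hS, Fintype.card_fin]) i))
            (f ((T.1ᶜ).orderEmbOfFin
                (by rw [Finset.card_compl, T.2, Fintype.card_fin]) j))) *
        Matrix.det (Matrix.of fun i j : Fin m =>
          B (e (U.orderEmbOfFin hU i)) (f (T.1.orderEmbOfFin T.2 j))) /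
        Matrix.det (Matrix.of fun i j : Fin n => B (e i) (f j))) =
      if S = U then 1 else 0 := by
  classical
  set G : Matrix (Fin n) (Fin n) F := Matrix.of fun i j => B (e i) (f j) with hG
  -- G is invertible
  have hdet : G.det ≠ 0 := by
    intro h0
    obtain ⟨v, hv, hmv⟩ := Matrix.exists_mulVec_eq_zero_iff.mpr h0
    set x := f.equivFun.symm v with hxdef
    have hx : ∀ i, B (e i) x = 0 := by
      intro i
      have h1 : B (e i) x = ∑ j, v j * B (e i) (f j) := by
        rw [hxdef, Module.Basis.equivFun_symm_apply, map_sum]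
        simp [smul_eq_mul]
      have h2 := congrFun hmv i
      rw [h1]
      simpa [Matrix.mulVec, dotProduct, hG, mul_comm] using h2
    have hxz : x = 0 := by
      apply hB.1
      intro w
      rw [hBsymm, ← e.sum_repr w, map_sum]
      simp [hx]
    apply hv
    have : f.equivFun.symm v = f.equivFun.symm 0 := by rw [map_zero]; exact hxz
    exact f.equivFun.symm.injective this
  -- the auxiliary matrix R
  set R : Matrix (Fin n) (Fin n) F := Matrix.of fun i j =>
    if h : i ∈ S then B (e (U.orderEmbOfFin hU ((S.orderIsoOfFin hS).symm ⟨i, h⟩))) (f j)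
    else B (e i) (f j) with hR
  have hRdet : R.det = (if S = U then 1 else 0) * G.det := by
    by_cases hSU : S = U
    · subst hSU
      rw [if_pos rfl, one_mul]
      congr 1
      ext i j
      simp only [hR, hG, Matrix.of_apply]
      by_cases h : i ∈ S
      · rw [dif_pos h, CMO.oE_orderIso_symm' S hS i h]
      · rw [dif_neg h]
    · rw [if_neg hSU, zero_mul]
      have hnsub : ¬ U ⊆ S := by
        intro hsub
        exact hSU (Finset.eq_of_subset_of_card_le hsub (le_of_eq (hS.trans hU.symm))).symm
      obtain ⟨u, huU, huS⟩ := Finset.not_subset.mp hnsub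
      set i0 := (U.orderIsoOfFin hU).symm ⟨u, huU⟩ with hi0
      have hrow : S.orderEmbOfFin hS i0 ≠ u := by
        intro h
        exact huS (h ▸ S.orderEmbOfFin_mem hS i0)
      apply Matrix.det_zero_of_row_eq hrow
      funext j
      have hmem : S.orderEmbOfFin hS i0 ∈ S := S.orderEmbOfFin_mem hS i0
      simp only [hR, Matrix.of_apply, dif_pos hmem, dif_neg huS]
      rw [CMO.oE_orderIso_symm S hS i0 hmem, hi0, CMO.oE_orderIso_symm' U hU u huU]
  -- rewrite the sum using Laplace expansion of R
  rw [← Finset.sum_div, div_eq_iff hdet, ← hRdet, CMO.laplace R S hS]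
  refine Finset.sum_congr rfl fun T _ => ?_
  congr 1
  · congr 1
    congr 1
    ext i j
    have hni : (Sᶜ).orderEmbOfFin (CMO.compl_card S hS) i ∉ S :=
      Finset.mem_compl.mp ((Sᶜ).orderEmbOfFin_mem (CMO.compl_card S hS) i)
    simp only [hR, Matrix.of_apply]
    rw [dif_neg hni]
  · congr 1
    ext i j
    have hmem : S.orderEmbOfFin hS i ∈ S := S.orderEmbOfFin_mem hS i
    simp only [hR, Matrix.of_apply]
    rw [dif_pos hmem, CMO.oE_orderIso_symm S hS i hmem]
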